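/- Let V be a finite-dimensional complex inner product space, let γ : V → V be a self-adjoint linear map with γ² = 1, and let D : V → V be a linear map satisfying the Ginsparg–Wilson relation γ∘D + D∘γ = D∘γ∘D and the γ-hermiticity condition D† = γ∘D∘γ (where D† is the adjoint of D). Define n₊ = dim(ker D ∩ ker(γ − 1)) and n₋ = dim(ker D ∩ ker(γ + 1)). Then the lattice index theorem holds: Tr(γ ∘ (1 − D/2)) = n₊ − n₋. -/

import Mathlib

open LinearMap Module Submodule

/-- Trace splits over an invariant complementary pair of submodules. -/
lemma trace_eq_add_of_isCompl {V : Type*} [AddCommGroup V] [Module ℂ V]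
    [FiniteDimensional ℂ V] {p q : Submodule ℂ V} (h : IsCompl p q)
    (f : V →ₗ[ℂ] V) (hp : Set.MapsTo f p p) (hq : Set.MapsTo f q q) :
    trace ℂ V f = trace ℂ p (f.restrict hp) + trace ℂ q (f.restrict hq) := by
  set N : Bool → Submodule ℂ V := fun b => bif b then p else q with hN
  have hint : DirectSum.IsInternal N := by
    rw [DirectSum.isInternal_submodule_iff_isCompl N (i := true) (j := false)
      (by simp) (by ext b; cases b <;> simp)]
    exact h
  have hf : ∀ b, Set.MapsTo f (N b) (N b) := by
    intro b; cases b
    · exact hq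
    · exact hp
  rw [LinearMap.trace_eq_sum_trace_restrict hint hf, Fintype.sum_bool]
  rfl

/-- Trace of an involution counts eigenvalues. -/
lemma trace_involution {V : Type*} [AddCommGroup V] [Module ℂ V]
    [FiniteDimensional ℂ V] (g : V →ₗ[ℂ] V) (hg : g ∘ₗ g = 1) :
    trace ℂ V g = (Module.finrank ℂ (ker (g - 1)) : ℂ)
      - (Module.finrank ℂ (ker (g + 1)) : ℂ) := by
  have hg' : ∀ x, g (g x) = x := fun x => by
    have := LinearMap.ext_iff.mp hg x; simpa using this
  set P : V →ₗ[ℂ] V := (2⁻¹ : ℂ) • (1 + g) with hP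
  set Q : V →ₗ[ℂ] V := (2⁻¹ : ℂ) • (1 - g) with hQ
  have hPproj : IsProj (ker (g - 1)) P := by
    constructor
    · intro x
      simp only [mem_ker, hP, LinearMap.sub_apply, LinearMap.smul_apply,
        LinearMap.add_apply, Module.End.one_apply, map_smul, map_add, hg' x]
      module
    · intro x hx
      simp only [mem_ker, LinearMap.sub_apply, Module.End.one_apply, sub_eq_zero] at hx
      simp only [hP, LinearMap.smul_apply, LinearMap.add_apply, Module.End.one_apply, hx]
      rw [smul_add]
      module
  have hQproj : IsProj (ker (g + 1)) Q := by
    constructor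
    · intro x
      simp only [mem_ker, hQ, LinearMap.add_apply, LinearMap.smul_apply,
        LinearMap.sub_apply, Module.End.one_apply, map_smul, map_sub, hg' x]
      module
    · intro x hx
      simp only [mem_ker, LinearMap.add_apply, Module.End.one_apply,
        add_eq_zero_iff_eq_neg] at hx
      simp only [hQ, LinearMap.smul_apply, LinearMap.sub_apply, Module.End.one_apply, hx]
      rw [smul_sub]
      module
  have hgPQ : g = P - Q := by
    rw [hP, hQ]; module
  calc trace ℂ V g = trace ℂ V P - trace ℂ V Q := by
        rw [← map_sub]; exact congrArg _ hgPQ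
    _ = _ := by rw [hPproj.trace, hQproj.trace]

theorem lattice_index_theorem
    {V : Type*} [NormedAddCommGroup V] [InnerProductSpace ℂ V] [FiniteDimensional ℂ V]
    (γ D : V →ₗ[ℂ] V)
    (hγsa : LinearMap.adjoint γ = γ) (hγ : γ ∘ₗ γ = 1)
    (hGW : γ ∘ₗ D + D ∘ₗ γ = D ∘ₗ γ ∘ₗ D)
    (hherm : LinearMap.adjoint D = γ ∘ₗ D ∘ₗ γ) :
    LinearMap.trace ℂ V (γ ∘ₗ (1 - (2⁻¹ : ℂ) • D)) =
      (Module.finrank ℂ ↥(LinearMap.ker D ⊓ LinearMap.ker (γ - 1)) : ℂ)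
        - (Module.finrank ℂ ↥(LinearMap.ker D ⊓ LinearMap.ker (γ + 1)) : ℂ) := by
  simp only [← Module.End.mul_eq_comp] at hγ hGW hherm
  set B : V →ₗ[ℂ] V := γ * D with hB
  have hkey : γ * B + B * γ = B * B := by
    have h1 : B * B = γ * (D * B) := by rw [hB]; noncomm_ring
    rw [h1, ← hGW, hB]
    noncomm_ring
  set A : V →ₗ[ℂ] V := γ + γ - B with hA
  have hanti : A * B + B * A = 0 := by
    have h1 : A * B + B * A = (γ * B + B * γ) + (γ * B + B * γ) - (B * B + B * B) := by
      rw [hA]; noncomm_ring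
    rw [h1, hkey]; abel
  have hBsa : LinearMap.adjoint B = B := by
    rw [hB, Module.End.mul_eq_comp, LinearMap.adjoint_comp, hherm, hγsa,
      ← Module.End.mul_eq_comp]
    calc γ * (D * γ) * γ = γ * D * (γ * γ) := by noncomm_ring
    _ = γ * D := by rw [hγ]; noncomm_ring
  set p := LinearMap.ker B with hp
  set q := LinearMap.range B with hq
  have hdisj : p ⊓ q = ⊥ := by
    rw [eq_bot_iff]
    rintro x ⟨hxk, y, rfl⟩
    have hxk' : B (B y) = 0 := hxk
    have h0 : (inner ℂ (B y) (B y) : ℂ) = 0 := by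
      have h2 := LinearMap.adjoint_inner_left B (B y) y
      rw [hBsa] at h2
      rw [h2, hxk', inner_zero_right]
    simpa [Submodule.mem_bot, inner_self_eq_zero] using h0
  have hcompl : IsCompl p q := by
    constructor
    · rw [disjoint_iff, hdisj]
    · rw [codisjoint_iff]
      apply Submodule.eq_top_of_finrank_eq
      have h1 := Submodule.finrank_sup_add_finrank_inf_eq p q
      rw [hdisj] at h1
      simp only [finrank_bot, add_zero] at h1
      rw [h1, hp, hq, add_comm]
      exact LinearMap.finrank_range_add_finrank_ker B
  have hABBA : ∀ x, A (B x) = - B (A x) := by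
    intro x
    have h2 := LinearMap.ext_iff.mp hanti x
    simp only [LinearMap.add_apply, Module.End.mul_apply, LinearMap.zero_apply] at h2
    exact eq_neg_of_add_eq_zero_left h2
  have hAp : Set.MapsTo A p p := by
    intro x hx
    have hx' : B x = 0 := hx
    have h2 := hABBA x
    rw [hx', map_zero] at h2
    show B (A x) = 0
    exact neg_eq_zero.mp h2.symm
  have hAq : Set.MapsTo A q q := by
    rintro x ⟨y, rfl⟩
    exact ⟨-(A y), by rw [map_neg, ← hABBA]⟩
  have hBp : Set.MapsTo B p p := by
    intro x hx
    have hx' : B x = 0 := hx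
    show B (B x) = 0
    rw [hx', map_zero]
  have hBq : Set.MapsTo B q q := by
    rintro x ⟨y, rfl⟩
    exact ⟨B y, rfl⟩
  have hγp : Set.MapsTo γ p p := by
    intro x hx
    have hx' : B x = 0 := hx
    show B (γ x) = 0
    have h2 := LinearMap.ext_iff.mp hkey x
    simp only [LinearMap.add_apply, Module.End.mul_apply] at h2
    have h3 : B (γ x) = B (B x) - γ (B x) := by rw [← h2]; abel
    rw [h3, hx', map_zero, map_zero, sub_zero]
  -- the trace of A on q vanishes
  have htrq : LinearMap.trace ℂ q (A.restrict hAq) = 0 := by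
    set Ar := A.restrict hAq with hAr
    set Br := B.restrict hBq with hBr
    have hanti' : Ar * Br = -(Br * Ar) := by
      apply LinearMap.ext
      intro x
      apply Subtype.ext
      have h2 := hABBA (x : V)
      exact h2
    have hBru : IsUnit Br := by
      rw [LinearMap.isUnit_iff_ker_eq_bot, eq_bot_iff]
      intro x hx
      have hx1 : B (x : V) = 0 := by
        have h2 := congrArg Subtype.val hx
        exact h2
      have hx0 : (x : V) ∈ p ⊓ q := ⟨hx1, x.2⟩
      rw [hdisj] at hx0
      rw [Submodule.mem_bot]
      exact Subtype.ext (by simpa using hx0)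
    obtain ⟨u, hu⟩ := hBru
    have h3 : (↑u⁻¹ : ↥q →ₗ[ℂ] ↥q) * Ar * ↑u = -Ar := by
      calc (↑u⁻¹ : ↥q →ₗ[ℂ] ↥q) * Ar * ↑u = ↑u⁻¹ * (Ar * Br) := by rw [mul_assoc, hu]
      _ = ↑u⁻¹ * -(Br * Ar) := by rw [hanti']
      _ = -(↑u⁻¹ * Br * Ar) := by
            rw [mul_neg (↑u⁻¹ : ↥q →ₗ[ℂ] ↥q) (Br * Ar), mul_assoc]
      _ = -Ar := by rw [← hu, u.inv_mul, one_mul]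
    have h2 : LinearMap.trace ℂ q (↑u⁻¹ * Ar * ↑u) = LinearMap.trace ℂ q Ar := by
      rw [LinearMap.trace_mul_comm, ← mul_assoc, u.mul_inv, one_mul]
    have h4 : LinearMap.trace ℂ q Ar = - LinearMap.trace ℂ q Ar := by
      conv_lhs => rw [← h2]
      rw [h3, map_neg]
    exact add_self_eq_zero.mp (add_eq_zero_iff_eq_neg.mpr h4)
  have hγinvol : ∀ x, γ (γ x) = x := fun x => by
    have h2 := LinearMap.ext_iff.mp hγ x
    simpa [Module.End.mul_apply] using h2
  have hArp : A.restrict hAp = γ.restrict hγp + γ.restrict hγp := by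
    apply LinearMap.ext
    intro x
    apply Subtype.ext
    have hx : B (x : V) = 0 := x.2
    show A (x : V) = γ (x : V) + γ (x : V)
    rw [hA]
    simp only [LinearMap.sub_apply, LinearMap.add_apply, hx, sub_zero]
  have hγrinvol : (γ.restrict hγp) ∘ₗ (γ.restrict hγp) = 1 := by
    apply LinearMap.ext
    intro x
    apply Subtype.ext
    show γ (γ (x : V)) = (x : V)
    exact hγinvol x
  have hkerBD : p = LinearMap.ker D := by
    apply le_antisymm
    · intro x hx
      have hx' : γ (D x) = 0 := hx
      have h2 := congrArg γ hx'
      rw [hγinvol, map_zero] at h2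
      exact h2
    · intro x hx
      have hx' : D x = 0 := hx
      show γ (D x) = 0
      rw [hx', map_zero]
  have hmap_plus : (LinearMap.ker (γ.restrict hγp - 1)).map p.subtype
      = LinearMap.ker D ⊓ LinearMap.ker (γ - 1) := by
    apply le_antisymm
    · rintro x ⟨y, hy, rfl⟩
      have h2 : γ (y : V) = (y : V) := by
        have h3 := congrArg Subtype.val (LinearMap.mem_ker.mp hy)
        have h4 : γ (y : V) - (y : V) = 0 := by
          exact h3
        exact sub_eq_zero.mp h4
      refine ⟨hkerBD ▸ y.2, ?_⟩
      show γ (y : V) - (y : V) = 0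
      rw [h2, sub_self]
    · rintro x ⟨h1, h2⟩
      have h1' : D x = 0 := h1
      have h2' : γ x - x = 0 := h2
      have hxp : x ∈ p := by show γ (D x) = 0; rw [h1', map_zero]
      refine ⟨⟨x, hxp⟩, LinearMap.mem_ker.mpr (Subtype.ext ?_), rfl⟩
      show γ x - x = 0
      exact h2'
  have hmap_minus : (LinearMap.ker (γ.restrict hγp + 1)).map p.subtype
      = LinearMap.ker D ⊓ LinearMap.ker (γ + 1) := by
    apply le_antisymm
    · rintro x ⟨y, hy, rfl⟩
      have h2 : γ (y : V) + (y : V) = 0 := by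
        have h3 := congrArg Subtype.val (LinearMap.mem_ker.mp hy)
        exact h3
      exact ⟨hkerBD ▸ y.2, h2⟩
    · rintro x ⟨h1, h2⟩
      have h1' : D x = 0 := h1
      have h2' : γ x + x = 0 := h2
      have hxp : x ∈ p := by show γ (D x) = 0; rw [h1', map_zero]
      refine ⟨⟨x, hxp⟩, LinearMap.mem_ker.mpr (Subtype.ext ?_), rfl⟩
      show γ x + x = 0
      exact h2'
  have hγD : γ ∘ₗ (1 - (2⁻¹ : ℂ) • D) = (2⁻¹ : ℂ) • A := by
    rw [hA, hB]
    apply LinearMap.ext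
    intro x
    simp only [LinearMap.comp_apply, LinearMap.smul_apply, LinearMap.sub_apply,
      LinearMap.add_apply, Module.End.one_apply, Module.End.mul_apply, map_sub, map_smul]
    module
  rw [hγD, map_smul, trace_eq_add_of_isCompl hcompl A hAp hAq, htrq, add_zero,
    hArp, map_add, trace_involution _ hγrinvol]
  rw [← hmap_plus, ← hmap_minus,
    Submodule.finrank_map_subtype_eq, Submodule.finrank_map_subtype_eq]
  rw [smul_eq_mul]
  ring
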